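/- Let m be a positive integer, let V i (for i ∈ Fin m) be real vector spaces, and let A i ⊆ V i be nonempty convex sets. Let J ⊆ (Fin m → ℝ) × (Π i, V i) be the set of pairs (w,u) such that w i ≥ 0 for all i, Σ_i w i = 1, and u i ∈ w i • A i for every i. Then J is convex, and the extreme points of J are exactly the pairs (w,u) for which there is an index j with w j = 1, w i = 0 for all i ≠ j, u j an extreme point of A j, and u i = 0 for all i ≠ j. (J is the concrete realization of the join A₁ ⋆ ⋯ ⋆ A_m, the coproduct of the A i in the category of convex sets; the proposition says the vertices of a join are exactly the images of the vertices of its factors.) -/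

import Mathlib

open scoped BigOperators Pointwise

/-- The concrete realization of the join `A₁ ⋆ ⋯ ⋆ A_m` of convex sets: pairs `(w, u)` of a
weight vector `w` and a tuple `u` with `u i ∈ w i • A i` for every `i`. -/
def JoinSet {m : ℕ} (V : Fin m → Type*) [∀ i, AddCommGroup (V i)] [∀ i, Module ℝ (V i)]
    (A : ∀ i, Set (V i)) : Set ((Fin m → ℝ) × (∀ i, V i)) :=
  {wu | (∀ i, 0 ≤ wu.1 i) ∧ (∑ i, wu.1 i = 1) ∧ ∀ i, wu.2 i ∈ wu.1 i • A i}

/-- Proposition 3.3: the join of nonempty convex sets is convex, and its extreme points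
(vertices) are exactly the images of the extreme points of the factors under the structure
maps `κ_j`. -/
theorem stmt1 (m : ℕ) (hm : 0 < m) (V : Fin m → Type*)
    [∀ i, AddCommGroup (V i)] [∀ i, Module ℝ (V i)]
    (A : ∀ i, Set (V i)) (hA : ∀ i, (A i).Nonempty) (hAconv : ∀ i, Convex ℝ (A i)) :
    Convex ℝ (JoinSet V A) ∧
    Set.extremePoints ℝ (JoinSet V A) =
      {wu | ∃ j : Fin m, wu.1 j = 1 ∧ (∀ i, i ≠ j → wu.1 i = 0) ∧
        wu.2 j ∈ Set.extremePoints ℝ (A j) ∧ ∀ i, i ≠ j → wu.2 i = 0} := by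
  constructor
  · -- Convexity
    rintro ⟨w, u⟩ ⟨hw0, hw1, hwu⟩ ⟨v, t⟩ ⟨hv0, hv1, hvt⟩ a b ha hb hab
    dsimp only at hw0 hw1 hwu hv0 hv1 hvt
    refine ⟨fun i => add_nonneg (mul_nonneg ha (hw0 i)) (mul_nonneg hb (hv0 i)), ?_, fun i => ?_⟩
    · show ∑ i, (a * w i + b * v i) = 1
      rw [Finset.sum_add_distrib, ← Finset.mul_sum, ← Finset.mul_sum, hw1, hv1,
        mul_one, mul_one, hab]
    · obtain ⟨p, hp, hpu⟩ := Set.mem_smul_set.mp (hwu i)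
      obtain ⟨q, hq, hqt⟩ := Set.mem_smul_set.mp (hvt i)
      have h2 : (a • (w, u) + b • (v, t)).2 i = (a * w i) • p + (b * v i) • q := by
        simp [← hpu, ← hqt, smul_smul]
      have h1 : (a • (w, u) + b • (v, t)).1 i = a * w i + b * v i := by simp
      rw [h1, h2]
      rcases eq_or_lt_of_le (add_nonneg (mul_nonneg ha (hw0 i)) (mul_nonneg hb (hv0 i))) with hc | hc
      · have haw : a * w i = 0 ∧ b * v i = 0 := by
          constructor <;> nlinarith [mul_nonneg ha (hw0 i), mul_nonneg hb (hv0 i)]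
        rw [← hc, Set.zero_smul_set (hA i), haw.1, haw.2]
        simp
      · set c := a * w i + b * v i with hcdef
        have : (a * w i) • p + (b * v i) • q = c • (((a * w i)/c) • p + ((b * v i)/c) • q) := by
          rw [smul_add, smul_smul, smul_smul]
          rw [mul_div_cancel₀ _ (ne_of_gt hc), mul_div_cancel₀ _ (ne_of_gt hc)]
        rw [this]
        refine Set.smul_mem_smul_set (hAconv i hp hq ?_ ?_ ?_)
        · exact div_nonneg (mul_nonneg ha (hw0 i)) hc.le
        · exact div_nonneg (mul_nonneg hb (hv0 i)) hc.le
        · field_simp; exact hcdef.symm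
  · ext ⟨w, u⟩
    simp only [Set.mem_setOf_eq, mem_extremePoints]
    constructor
    · rintro ⟨⟨hw0, hw1, hwu⟩, hExt⟩
      dsimp only at hw0 hw1 hwu
      choose a haA hau using fun i => Set.mem_smul_set.mp (hwu i)
      -- Step B: every coordinate of w is 0 or 1
      have hw01 : ∀ j, w j = 0 ∨ w j = 1 := by
        intro j
        by_contra hj
        push_neg at hj
        have hwjpos : 0 < w j := lt_of_le_of_ne (hw0 j) (Ne.symm hj.1)
        have hwjlt : w j < 1 := by
          rcases lt_or_eq_of_le (Finset.single_le_sum (fun i _ => hw0 i) (Finset.mem_univ j)) with h | h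
          · rwa [hw1] at h
          · exact absurd (h.trans hw1) hj.2
        obtain ⟨k, hkj, hkpos⟩ : ∃ k, k ≠ j ∧ 0 < w k := by
          by_contra hk
          push_neg at hk
          have : ∑ i, w i = w j := Finset.sum_eq_single j
            (fun i _ hij => le_antisymm (hk i hij) (hw0 i)) (fun h => absurd (Finset.mem_univ j) h)
          rw [hw1] at this; exact hj.2 this.symm
        set ε := min (w j) (w k) with hε
        have hεpos : 0 < ε := lt_min hwjpos hkpos
        set δ : Fin m → ℝ := fun i => (if i = j then ε else 0) - (if i = k then ε else 0) with hδ
        have hδsum : ∑ i, δ i = 0 := by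
          simp [hδ, Finset.sum_sub_distrib, Finset.sum_ite_eq']
        have hδj : δ j = ε := by simp [hδ, (Ne.symm hkj : j ≠ k)]
        have hδk : δ k = -ε := by simp [hδ, hkj]
        have hδother : ∀ i, i ≠ j → i ≠ k → δ i = 0 := by
          intro i h1 h2; simp [hδ, h1, h2]
        have hδle : ∀ i, |δ i| ≤ w i := by
          intro i
          rcases eq_or_ne i j with rfl | h1
          · rw [hδj, abs_of_pos hεpos]; exact min_le_left _ _
          rcases eq_or_ne i k with rfl | h2
          · rw [hδk, abs_neg, abs_of_pos hεpos]; exact min_le_right _ _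
          · rw [hδother i h1 h2]; simpa using hw0 i
        set x₁ : (Fin m → ℝ) × (∀ i, V i) := (w + δ, fun i => (w i + δ i) • a i) with hx₁
        set x₂ : (Fin m → ℝ) × (∀ i, V i) := (w - δ, fun i => (w i - δ i) • a i) with hx₂
        have hx₁J : x₁ ∈ JoinSet V A := by
          refine ⟨fun i => ?_, ?_, fun i => ?_⟩
          · have := hδle i; simp only [hx₁, Pi.add_apply]
            have := abs_le.mp this; linarith [this.1]
          · simp [hx₁, Finset.sum_add_distrib, hw1, hδsum]
          · exact Set.smul_mem_smul_set (haA i)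
        have hx₂J : x₂ ∈ JoinSet V A := by
          refine ⟨fun i => ?_, ?_, fun i => ?_⟩
          · have := hδle i; simp only [hx₂, Pi.sub_apply]
            have := abs_le.mp this; linarith [this.2]
          · simp [hx₂, Finset.sum_sub_distrib, hw1, hδsum]
          · exact Set.smul_mem_smul_set (haA i)
        have hseg : (w, u) ∈ openSegment ℝ x₁ x₂ := by
          refine ⟨1/2, 1/2, by norm_num, by norm_num, by norm_num, ?_⟩
          apply Prod.ext
          · simp only [hx₁, hx₂, Prod.smul_fst, Prod.fst_add]
            funext i; simp [Pi.add_apply, Pi.sub_apply]; ring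
          · simp only [hx₁, hx₂, Prod.smul_snd, Prod.snd_add]
            funext i
            simp only [Pi.add_apply, Pi.smul_apply, Pi.sub_apply]
            rw [← hau i, smul_smul, smul_smul, ← add_smul]
            congr 1; ring
        have := (hExt x₁ hx₁J x₂ hx₂J hseg).1
        have : x₁.1 j = w j := by rw [this]
        simp only [hx₁, Pi.add_apply, hδj] at this
        linarith
      -- Step C: find the index j
      obtain ⟨j, hj1⟩ : ∃ j, w j = 1 := by
        by_contra hj
        push_neg at hj
        have : ∀ i ∈ Finset.univ, w i = 0 := fun i _ => (hw01 i).resolve_right (hj i)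
        rw [Finset.sum_congr rfl this] at hw1
        simp at hw1
      have hj0 : ∀ i, i ≠ j → w i = 0 := by
        intro i hij
        rcases hw01 i with h | h
        · exact h
        · exfalso
          have hsub : ({i, j} : Finset (Fin m)) ⊆ Finset.univ := Finset.subset_univ _
          have : w i + w j ≤ ∑ l, w l := by
            rw [← Finset.sum_pair hij]
            exact Finset.sum_le_sum_of_subset_of_nonneg hsub (fun l _ _ => hw0 l)
          rw [hw1, h, hj1] at this; linarith
      have hu0 : ∀ i, i ≠ j → u i = 0 := by
        intro i hij
        have := hwu i
        rw [hj0 i hij, Set.zero_smul_set (hA i)] at this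
        simpa using this
      have hujA : u j ∈ A j := by
        have := hwu j
        rw [hj1] at this
        obtain ⟨y, hy, hyu⟩ := Set.mem_smul_set.mp this
        rw [one_smul] at hyu; rwa [← hyu]
      refine ⟨j, hj1, hj0, ⟨hujA, ?_⟩, hu0⟩
      -- u j is an extreme point of A j
      intro x hx y hy hxy
      obtain ⟨c, d, hc, hd, hcd, hsum⟩ := hxy
      set x₁ : (Fin m → ℝ) × (∀ i, V i) := (w, Function.update u j x) with hx₁
      set x₂ : (Fin m → ℝ) × (∀ i, V i) := (w, Function.update u j y) with hx₂
      have hmem : ∀ (z : V j), z ∈ A j →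
          (w, Function.update u j z) ∈ JoinSet V A := by
        intro z hz
        refine ⟨hw0, hw1, fun i => ?_⟩
        dsimp only
        rcases eq_or_ne i j with rfl | hij
        · simp only [Function.update_self, hj1]
          exact ⟨z, hz, one_smul ℝ z⟩
        · rw [Function.update_of_ne hij, hj0 i hij, Set.zero_smul_set (hA i), hu0 i hij]
          simp
      have hseg : (w, u) ∈ openSegment ℝ x₁ x₂ := by
        refine ⟨c, d, hc, hd, hcd, ?_⟩
        apply Prod.ext
        · simp only [hx₁, hx₂, Prod.smul_fst, Prod.fst_add]
          funext i; simp only [Pi.add_apply, Pi.smul_apply, smul_eq_mul]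
          rw [← add_mul, hcd, one_mul]
        · simp only [hx₁, hx₂, Prod.smul_snd, Prod.snd_add]
          funext i
          rcases eq_or_ne i j with rfl | hij
          · simpa using hsum
          · simp [Function.update_of_ne hij, hu0 i hij, ← add_smul]
      obtain ⟨h1, h2⟩ := hExt x₁ (hmem x hx) x₂ (hmem y hy) hseg
      constructor
      · have := congrFun (congrArg Prod.snd h1) j
        simpa [hx₁] using this
      · have := congrFun (congrArg Prod.snd h2) j
        simpa [hx₂] using this
    · rintro ⟨j, hj1, hj0, ⟨hujA, hujExt⟩, hu0⟩
      have hwsum : ∑ i, w i = 1 := by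
        rw [Finset.sum_eq_single j (fun i _ hij => hj0 i hij)
          (fun h => absurd (Finset.mem_univ j) h), hj1]
      have hmemJ : (w, u) ∈ JoinSet V A := by
        refine ⟨fun i => ?_, hwsum, fun i => ?_⟩ <;> dsimp only
        · rcases eq_or_ne i j with rfl | hij
          · rw [hj1]; norm_num
          · rw [hj0 i hij]
        · rcases eq_or_ne i j with rfl | hij
          · rw [hj1]; exact ⟨u i, hujA, one_smul ℝ _⟩
          · rw [hj0 i hij, Set.zero_smul_set (hA i), hu0 i hij]; simp
      refine ⟨hmemJ, ?_⟩
      rintro ⟨w₁, u₁⟩ ⟨hw₁0, hw₁1, hwu₁⟩ ⟨w₂, u₂⟩ ⟨hw₂0, hw₂1, hwu₂⟩ hseg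
      dsimp only at hw₁0 hw₁1 hwu₁ hw₂0 hw₂1 hwu₂
      obtain ⟨c, d, hc, hd, hcd, hsum⟩ := hseg
      have hfst : ∀ i, c * w₁ i + d * w₂ i = w i := by
        intro i
        have := congrFun (congrArg Prod.fst hsum) i
        simpa using this
      have hsnd : ∀ i, c • u₁ i + d • u₂ i = u i := by
        intro i
        have := congrFun (congrArg Prod.snd hsum) i
        simpa using this
      have hw₁0' : ∀ i, i ≠ j → w₁ i = 0 ∧ w₂ i = 0 := by
        intro i hij
        have h := hfst i
        rw [hj0 i hij] at h
        constructor <;> nlinarith [mul_nonneg hc.le (hw₁0 i), mul_nonneg hd.le (hw₂0 i)]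
      have hw₁j : w₁ j = 1 := by
        rw [Finset.sum_eq_single j (fun i _ hij => (hw₁0' i hij).1)
          (fun h => absurd (Finset.mem_univ j) h)] at hw₁1
        exact hw₁1
      have hw₂j : w₂ j = 1 := by
        rw [Finset.sum_eq_single j (fun i _ hij => (hw₁0' i hij).2)
          (fun h => absurd (Finset.mem_univ j) h)] at hw₂1
        exact hw₂1
      have hu₁0 : ∀ i, i ≠ j → u₁ i = 0 := by
        intro i hij
        have := hwu₁ i
        rw [(hw₁0' i hij).1, Set.zero_smul_set (hA i)] at this
        simpa using this
      have hu₂0 : ∀ i, i ≠ j → u₂ i = 0 := by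
        intro i hij
        have := hwu₂ i
        rw [(hw₁0' i hij).2, Set.zero_smul_set (hA i)] at this
        simpa using this
      have hu₁A : u₁ j ∈ A j := by
        have := hwu₁ j; rw [hw₁j] at this
        obtain ⟨y, hy, hyu⟩ := Set.mem_smul_set.mp this
        rw [one_smul] at hyu; rwa [← hyu]
      have hu₂A : u₂ j ∈ A j := by
        have := hwu₂ j; rw [hw₂j] at this
        obtain ⟨y, hy, hyu⟩ := Set.mem_smul_set.mp this
        rw [one_smul] at hyu; rwa [← hyu]
      have hsegj : u j ∈ openSegment ℝ (u₁ j) (u₂ j) :=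
        ⟨c, d, hc, hd, hcd, hsnd j⟩
      obtain ⟨he1, he2⟩ := hujExt (u₁ j) hu₁A (u₂ j) hu₂A hsegj
      have hwx : ∀ (w' : Fin m → ℝ), w' j = 1 → (∀ i, i ≠ j → w' i = 0) → w' = w := by
        intro w' h1 h2
        funext i
        rcases eq_or_ne i j with rfl | hij
        · rw [h1, hj1]
        · rw [h2 i hij, hj0 i hij]
      have hux : ∀ (u' : ∀ i, V i), u' j = u j → (∀ i, i ≠ j → u' i = 0) → u' = u := by
        intro u' h1 h2
        funext i
        rcases eq_or_ne i j with rfl | hij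
        · exact h1
        · rw [h2 i hij, hu0 i hij]
      exact ⟨Prod.ext (hwx w₁ hw₁j (fun i h => (hw₁0' i h).1)) (hux u₁ he1 hu₁0),
             Prod.ext (hwx w₂ hw₂j (fun i h => (hw₁0' i h).2)) (hux u₂ he2 hu₂0)⟩
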